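/- arXiv:1408.2120 — 10 statements merged into one kernel-verified Lean document; each statement's English description precedes it below -/
import Mathlib

section
/- For θ ∈ (0, π) with θ ≠ 0 mod π, the Grushin geodesic satisfies x(θ, π/sin θ) = x(π−θ, π/sin θ) = 1 and y(θ, π/sin θ) = y(π−θ, π/sin θ) = π/(2 sin²θ), i.e., the two geodesics with parameters θ and π−θ meet at time π/sin θ at the point (1, π/(2 sin θ |sin θ|)). -/
open Real

/-- First coordinate of the Grushin geodesic from (-1,0). -/
noncomputable def grushinX (θ t : ℝ) : ℝ := -Real.sin (θ - t * Real.sin θ) / Real.sin θ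

/-- Second coordinate of the Grushin geodesic from (-1,0). -/
noncomputable def grushinY (θ t : ℝ) : ℝ :=
  (2 * t * Real.sin θ - 2 * Real.cos θ * Real.sin θ +
    Real.sin (2 * θ - 2 * t * Real.sin θ)) / (4 * (Real.sin θ) ^ 2)

/-- The geodesics with parameters θ and π-θ meet at time π/sin θ at the point
    (1, π/(2 sin²θ)). -/
theorem grushin_geodesics_meet (θ : ℝ) (hθ : θ ∈ Set.Ioo 0 Real.pi) :
    grushinX θ (Real.pi / Real.sin θ) = 1 ∧
    grushinX (Real.pi - θ) (Real.pi / Real.sin θ) = 1 ∧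
    grushinY θ (Real.pi / Real.sin θ) = Real.pi / (2 * (Real.sin θ) ^ 2) ∧
    grushinY (Real.pi - θ) (Real.pi / Real.sin θ) = Real.pi / (2 * (Real.sin θ) ^ 2) := by
  have hs : Real.sin θ ≠ 0 := ne_of_gt (Real.sin_pos_of_pos_of_lt_pi hθ.1 hθ.2)
  have ht : Real.pi / Real.sin θ * Real.sin θ = Real.pi := div_mul_cancel₀ _ hs
  have ht2 : 2 * (Real.pi / Real.sin θ) * Real.sin θ = 2 * Real.pi := by
    rw [mul_assoc, ht]
  refine ⟨?_, ?_, ?_, ?_⟩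
  · rw [grushinX, ht, Real.sin_sub_pi, neg_neg, div_self hs]
  · rw [grushinX, Real.sin_pi_sub, ht]
    have : Real.pi - θ - Real.pi = -θ := by ring
    rw [this, Real.sin_neg, neg_neg, div_self hs]
  · rw [grushinY, ht2]
    have : 2 * θ - 2 * Real.pi = 2 * θ - 2 * Real.pi := rfl
    rw [Real.sin_sub_two_pi, Real.sin_two_mul]
    field_simp
    ring
  · rw [grushinY, Real.sin_pi_sub, Real.cos_pi_sub, ht2]
    have h1 : 2 * (Real.pi - θ) - 2 * Real.pi = -(2 * θ) := by ring
    rw [h1, Real.sin_neg, Real.sin_two_mul]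
    field_simp
    ring
end

section
/- For all θ ∈ (0, π/2) and u ∈ (0, π), the vectors (cos u, sin u) and (1 − u cos θ sin θ, u cos²θ) are not parallel; equivalently, cos(u) · u cos²θ − sin(u) · (1 − u cos θ sin θ) ≠ 0. -/
/-- For θ ∈ (0, π/2) and u ∈ (0, π), the vectors (cos u, sin u) and
    (1 − u cos θ sin θ, u cos²θ) are not parallel: their determinant is nonzero. -/
theorem grushin_vectors_not_parallel (θ u : ℝ)
    (hθ : θ ∈ Set.Ioo 0 (Real.pi / 2)) (hu : u ∈ Set.Ioo 0 Real.pi) :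
    Real.cos u * (u * (Real.cos θ) ^ 2) -
      Real.sin u * (1 - u * Real.cos θ * Real.sin θ) ≠ 0 := by
  obtain ⟨hθ0, hθ1⟩ := hθ
  obtain ⟨hu0, hu1⟩ := hu
  -- rewrite the determinant as u * (cosθ * cos(u-θ)) - sin u
  have key : Real.cos u * (u * (Real.cos θ) ^ 2) -
      Real.sin u * (1 - u * Real.cos θ * Real.sin θ)
      = u * ((Real.cos u + Real.cos (u - 2*θ)) / 2) - Real.sin u := by
    rw [Real.cos_sub, Real.cos_two_mul, Real.sin_two_mul]
    ring
  rw [key]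
  have hx0 : 0 < u / 2 := by linarith
  have hx1 : u / 2 < Real.pi / 2 := by linarith
  have hcos : 0 < Real.cos (u / 2) := Real.cos_pos_of_mem_Ioo ⟨by linarith, hx1⟩
  have htan : u / 2 < Real.tan (u / 2) := Real.lt_tan hx0 hx1
  have hsin : u / 2 * Real.cos (u / 2) < Real.sin (u / 2) := by
    rw [Real.tan_eq_sin_div_cos] at htan
    calc u / 2 * Real.cos (u / 2)
        < Real.sin (u / 2) / Real.cos (u / 2) * Real.cos (u / 2) := by
          exact mul_lt_mul_of_pos_right htan hcos
      _ = Real.sin (u / 2) := by field_simp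
  -- u * (cos u + 1) / 2 < sin u
  have hmain : u * ((Real.cos u + 1) / 2) < Real.sin u := by
    have hu2 : u = 2 * (u / 2) := by ring
    rw [hu2, Real.cos_two_mul, Real.sin_two_mul]
    nlinarith [hcos, hsin, mul_pos hx0 hcos]
  have hle : Real.cos (u - 2*θ) ≤ 1 := Real.cos_le_one _
  have : u * ((Real.cos u + Real.cos (u - 2*θ)) / 2) - Real.sin u < 0 := by
    nlinarith [hmain, hle, hu0]
  linarith
end

section
/- For all θ ∈ (0, π) and t with 0 < t sin θ < π, one has sin(t sin θ) − t cos θ sin θ · cos(θ − t sin θ) > 0. -/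
/-- For θ ∈ (0, π) and t with 0 < t sin θ < π, one has
    sin(t sin θ) − t cos θ sin θ · cos(θ − t sin θ) > 0. -/
theorem grushin_dx_dtheta_numerator_pos (θ t : ℝ)
    (hθ : θ ∈ Set.Ioo 0 Real.pi)
    (h1 : 0 < t * Real.sin θ) (h2 : t * Real.sin θ < Real.pi) :
    Real.sin (t * Real.sin θ) -
      t * Real.cos θ * Real.sin θ * Real.cos (θ - t * Real.sin θ) > 0 := by
  set s := t * Real.sin θ with hs
  -- product-to-sum: 2 cos θ cos (θ - s) = cos (2θ - s) + cos s
  have hprod : 2 * (Real.cos θ * Real.cos (θ - s)) =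
      Real.cos (θ + (θ - s)) + Real.cos s := by
    have h1' := Real.cos_add θ (θ - s)
    have h2' := Real.cos_sub θ (θ - s)
    have : θ - (θ - s) = s := by ring
    rw [this] at h2'
    linarith
  have hbound : Real.cos θ * Real.cos (θ - s) ≤ (1 + Real.cos s) / 2 := by
    have := Real.cos_le_one (θ + (θ - s))
    linarith
  -- key: sin s > s * (1 + cos s) / 2 for s ∈ (0, π)
  have hhalf : 0 < s / 2 := by linarith
  have hhalf2 : s / 2 < Real.pi / 2 := by linarith
  have hcos : 0 < Real.cos (s / 2) :=
    Real.cos_pos_of_mem_Ioo ⟨by linarith [Real.pi_pos], hhalf2⟩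
  have htan : s / 2 < Real.tan (s / 2) := Real.lt_tan hhalf hhalf2
  have hsin : s / 2 * Real.cos (s / 2) < Real.sin (s / 2) := by
    rw [Real.tan_eq_sin_div_cos, lt_div_iff₀ hcos] at htan
    linarith
  have hsin2 : Real.sin s = 2 * Real.sin (s / 2) * Real.cos (s / 2) := by
    have := Real.sin_two_mul (s / 2)
    rw [show 2 * (s / 2) = s by ring] at this
    exact this
  have hcos2 : 1 + Real.cos s = 2 * Real.cos (s / 2) ^ 2 := by
    have := Real.cos_sq (s / 2)
    rw [show 2 * (s / 2) = s by ring] at this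
    nlinarith [this]
  have hkey : Real.sin s - s * ((1 + Real.cos s) / 2) > 0 := by
    rw [hsin2, hcos2]
    have : Real.sin (s / 2) - s / 2 * Real.cos (s / 2) > 0 := by linarith
    nlinarith [this, hcos]
  have heq : t * Real.cos θ * Real.sin θ * Real.cos (θ - s)
      = s * (Real.cos θ * Real.cos (θ - s)) := by rw [hs]; ring
  rw [heq]
  nlinarith [hbound, hkey, h1]
end

section
/- For θ ∈ (0, π), the Jacobian determinant of the map γ(θ,t) = (x(θ,t), y(θ,t)), where x(θ,t) = −sin(θ − t sin θ)/sin θ and y(θ,t) = (2t sin θ − 2 cos θ sin θ + sin(2θ − 2t sin θ))/(4 sin²θ), equals (t cos θ cos(θ − t sin θ) sin θ − sin(t sin θ))/sin³θ. -/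
/-- For θ ∈ (0,π), the Jacobian determinant of γ(θ,t) = (x(θ,t), y(θ,t)) equals
    (t cos θ cos(θ − t sin θ) sin θ − sin(t sin θ))/sin³θ. -/
theorem grushin_jacobian (θ t : ℝ) (hθ : θ ∈ Set.Ioo 0 Real.pi) :
    deriv (fun θ' => grushinX θ' t) θ * deriv (fun t' => grushinY θ t') t -
      deriv (fun θ' => grushinY θ' t) θ * deriv (fun t' => grushinX θ t') t =
    (t * Real.cos θ * Real.cos (θ - t * Real.sin θ) * Real.sin θ -
      Real.sin (t * Real.sin θ)) / (Real.sin θ) ^ 3 := by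
  have hs : Real.sin θ ≠ 0 := ne_of_gt (Real.sin_pos_of_pos_of_lt_pi hθ.1 hθ.2)
  have dXt : deriv (fun t' => grushinX θ t') t = Real.cos (θ - t * Real.sin θ) := by
    have h1 : HasDerivAt (fun t' : ℝ => θ - t' * Real.sin θ) (-Real.sin θ) t := by
      simpa using (hasDerivAt_const t θ).fun_sub ((hasDerivAt_id' t).mul_const (Real.sin θ))
    have h2 := (h1.sin.fun_neg).div_const (Real.sin θ)
    have h3 : HasDerivAt (fun t' => grushinX θ t') (Real.cos (θ - t * Real.sin θ)) t := by
      unfold grushinX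
      refine h2.congr_deriv ?_
      field_simp
    exact h3.deriv
  have dYt : deriv (fun t' => grushinY θ t') t =
      (2 * Real.sin θ - Real.cos (2 * θ - 2 * t * Real.sin θ) * (2 * Real.sin θ)) /
        (4 * Real.sin θ ^ 2) := by
    have h1 : HasDerivAt (fun t' : ℝ => 2 * t' * Real.sin θ) (2 * Real.sin θ) t := by
      simpa using ((hasDerivAt_id' t).const_mul 2).mul_const (Real.sin θ)
    have h2 : HasDerivAt (fun t' : ℝ => 2 * θ - 2 * t' * Real.sin θ) (-(2 * Real.sin θ)) t := by
      simpa using (hasDerivAt_const t (2 * θ)).fun_sub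
        (((hasDerivAt_id' t).const_mul 2).mul_const (Real.sin θ))
    have h3 := (((h1.sub_const (2 * Real.cos θ * Real.sin θ)).fun_add h2.sin).div_const
        (4 * Real.sin θ ^ 2))
    have h4 : HasDerivAt (fun t' => grushinY θ t')
        ((2 * Real.sin θ - Real.cos (2 * θ - 2 * t * Real.sin θ) * (2 * Real.sin θ)) /
          (4 * Real.sin θ ^ 2)) t := by
      unfold grushinY
      refine h3.congr_deriv ?_
      ring
    exact h4.deriv
  have dXθ : deriv (fun θ' => grushinX θ' t) θ =
      ((-(Real.cos (θ - t * Real.sin θ) * (1 - t * Real.cos θ))) * Real.sin θ -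
        (-Real.sin (θ - t * Real.sin θ)) * Real.cos θ) / (Real.sin θ) ^ 2 := by
    have h1 : HasDerivAt (fun θ' : ℝ => θ' - t * Real.sin θ') (1 - t * Real.cos θ) θ :=
      (hasDerivAt_id' θ).sub ((Real.hasDerivAt_sin θ).const_mul t)
    have h2 := (h1.sin.fun_neg).fun_div (Real.hasDerivAt_sin θ) hs
    have h3 : HasDerivAt (fun θ' => grushinX θ' t)
        (((-(Real.cos (θ - t * Real.sin θ) * (1 - t * Real.cos θ))) * Real.sin θ -
          (-Real.sin (θ - t * Real.sin θ)) * Real.cos θ) / (Real.sin θ) ^ 2) θ := by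
      unfold grushinX
      convert h2 using 1
    exact h3.deriv
  have dYθ : deriv (fun θ' => grushinY θ' t) θ =
      ((2 * t * Real.cos θ - (2 * Real.cos θ * Real.cos θ - 2 * Real.sin θ * Real.sin θ) +
          Real.cos (2 * θ - 2 * t * Real.sin θ) * (2 - 2 * t * Real.cos θ)) *
            (4 * Real.sin θ ^ 2) -
        (2 * t * Real.sin θ - 2 * Real.cos θ * Real.sin θ +
          Real.sin (2 * θ - 2 * t * Real.sin θ)) * (4 * (2 * Real.sin θ * Real.cos θ))) /
        (4 * Real.sin θ ^ 2) ^ 2 := by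
    have h1 : HasDerivAt (fun θ' : ℝ => 2 * t * Real.sin θ') (2 * t * Real.cos θ) θ := by
      simpa [mul_assoc] using (Real.hasDerivAt_sin θ).const_mul (2 * t)
    have h2 : HasDerivAt (fun θ' : ℝ => 2 * Real.cos θ' * Real.sin θ')
        (2 * Real.cos θ * Real.cos θ - 2 * Real.sin θ * Real.sin θ) θ := by
      have := (((Real.hasDerivAt_cos θ).const_mul 2).fun_mul (Real.hasDerivAt_sin θ))
      refine this.congr_deriv ?_
      ring
    have h3 : HasDerivAt (fun θ' : ℝ => 2 * θ' - 2 * t * Real.sin θ')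
        (2 - 2 * t * Real.cos θ) θ := by
      have := ((hasDerivAt_id' θ).const_mul 2).fun_sub ((Real.hasDerivAt_sin θ).const_mul (2 * t))
      refine this.congr_deriv ?_
      ring
    have h4 : HasDerivAt (fun θ' : ℝ => 4 * (Real.sin θ') ^ 2)
        (4 * (2 * Real.sin θ * Real.cos θ)) θ := by
      simpa using (((Real.hasDerivAt_sin θ).pow 2).const_mul 4)
    have h5 := (((h1.fun_sub h2).fun_add h3.sin).fun_div h4 (by positivity))
    have h6 : HasDerivAt (fun θ' => grushinY θ' t) _ θ := h5
    rw [h6.deriv]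
  rw [dXt, dYt, dXθ, dYθ]
  have h2A : 2 * θ - 2 * t * Real.sin θ = 2 * (θ - t * Real.sin θ) := by ring
  rw [h2A]
  simp only [Real.sin_two_mul, Real.cos_two_mul, Real.sin_sub, Real.cos_sub]
  field_simp
  linear_combination ((-(2 * Real.sin θ * Real.cos θ)) *
      Real.cos (t * Real.sin θ) + (-(2 * Real.sin θ ^ 2) - 4) * Real.sin (t * Real.sin θ)) *
    Real.sin_sq_add_cos_sq θ
end

section
/- For every θ ∈ (0, π) with θ ≠ π/2, if t_θ > 0 satisfies Jac(θ, t_θ) = 0 where Jac(θ,t) = (t cos θ cos(θ − t sin θ) sin θ − sin(t sin θ))/sin³θ, then ∂Jac/∂θ(θ, t_θ) ≠ 0. -/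
/-- Jacobian of the Grushin exponential map from (-1,0). -/
noncomputable def grushinJac (θ t : ℝ) : ℝ :=
  (t * Real.cos θ * Real.cos (θ - t * Real.sin θ) * Real.sin θ -
    Real.sin (t * Real.sin θ)) / (Real.sin θ) ^ 3

/-- For θ ∈ (0,π) with θ ≠ π/2, at any conjugate time t_θ > 0 (a zero of the Jacobian),
    the derivative of the Jacobian in θ does not vanish. -/
theorem grushin_conjugate_nondegenerate (θ t : ℝ) (hθ : θ ∈ Set.Ioo 0 Real.pi)
    (hθ' : θ ≠ Real.pi / 2) (ht : 0 < t) (hJac : grushinJac θ t = 0) :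
    deriv (fun θ' => grushinJac θ' t) θ ≠ 0 := by
  obtain ⟨hθ0, hθπ⟩ := hθ
  have hs : 0 < Real.sin θ := Real.sin_pos_of_pos_of_lt_pi hθ0 hθπ
  have hc : Real.cos θ ≠ 0 := by
    intro h
    rcases Real.cos_eq_zero_iff.mp h with ⟨n, hn⟩
    have hn0 : n = 0 := by
      have hπ : (0:ℝ) < Real.pi := Real.pi_pos
      have ha : (0:ℝ) < 2 * (n:ℝ) + 1 := by nlinarith [hθ0, hn]
      have hb : 2 * (n:ℝ) + 1 < 2 := by nlinarith [hθπ, hn]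
      have ha' : (0:ℤ) < 2 * n + 1 := by exact_mod_cast ha
      have hb' : (2:ℤ) * n + 1 < 2 := by exact_mod_cast hb
      omega
    rw [hn0] at hn
    apply hθ'
    rw [hn]; push_cast; ring
  have hs3 : (Real.sin θ) ^ 3 ≠ 0 := pow_ne_zero 3 hs.ne'
  -- numerator vanishes
  have hN : t * Real.cos θ * Real.cos (θ - t * Real.sin θ) * Real.sin θ -
      Real.sin (t * Real.sin θ) = 0 := by
    rcases div_eq_zero_iff.mp hJac with h | h
    · exact h
    · exact absurd h hs3
  -- set up the derivative
  have h1 : HasDerivAt Real.sin (Real.cos θ) θ := Real.hasDerivAt_sin θ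
  have h2 : HasDerivAt (fun x => t * Real.cos x) (t * -Real.sin θ) θ :=
    (Real.hasDerivAt_cos θ).const_mul t
  have h3 : HasDerivAt (fun x => t * Real.sin x) (t * Real.cos θ) θ := h1.const_mul t
  have h4 : HasDerivAt (fun x => x - t * Real.sin x) (1 - t * Real.cos θ) θ := by
    exact (hasDerivAt_id' θ).sub h3
  have h5 : HasDerivAt (fun x => Real.cos (x - t * Real.sin x))
      (-Real.sin (θ - t * Real.sin θ) * (1 - t * Real.cos θ)) θ :=
    by have := (Real.hasDerivAt_cos (θ - t * Real.sin θ)).comp θ h4; exact this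
  have h6 : HasDerivAt (fun x => Real.sin (t * Real.sin x))
      (Real.cos (t * Real.sin θ) * (t * Real.cos θ)) θ :=
    by have := (Real.hasDerivAt_sin (t * Real.sin θ)).comp θ h3; exact this
  have hNum : HasDerivAt
      (fun x => t * Real.cos x * Real.cos (x - t * Real.sin x) * Real.sin x -
        Real.sin (t * Real.sin x))
      (((t * -Real.sin θ) * Real.cos (θ - t * Real.sin θ) +
          (t * Real.cos θ) * (-Real.sin (θ - t * Real.sin θ) * (1 - t * Real.cos θ))) * Real.sin θ +
          (t * Real.cos θ * Real.cos (θ - t * Real.sin θ)) * Real.cos θ -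
          Real.cos (t * Real.sin θ) * (t * Real.cos θ)) θ :=
    ((h2.mul h5).mul h1).sub h6
  have hDen : HasDerivAt (fun x => (Real.sin x) ^ 3) (3 * (Real.sin θ) ^ 2 * Real.cos θ) θ := by
    have := h1.pow 3; exact this
  have hF : HasDerivAt (fun θ' => grushinJac θ' t)
      (((((t * -Real.sin θ) * Real.cos (θ - t * Real.sin θ) +
          (t * Real.cos θ) * (-Real.sin (θ - t * Real.sin θ) * (1 - t * Real.cos θ))) * Real.sin θ +
          (t * Real.cos θ * Real.cos (θ - t * Real.sin θ)) * Real.cos θ -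
          Real.cos (t * Real.sin θ) * (t * Real.cos θ)) * (Real.sin θ) ^ 3 -
        (t * Real.cos θ * Real.cos (θ - t * Real.sin θ) * Real.sin θ -
          Real.sin (t * Real.sin θ)) * (3 * (Real.sin θ) ^ 2 * Real.cos θ)) /
        ((Real.sin θ) ^ 3) ^ 2) θ := hNum.div hDen hs3
  intro hcontra
  have hval := hF.deriv ▸ hcontra
  -- from the vanishing of the derivative and of the numerator, extract the key equation
  rw [hN] at hval
  have hE : ((t * -Real.sin θ) * Real.cos (θ - t * Real.sin θ) +
      (t * Real.cos θ) * (-Real.sin (θ - t * Real.sin θ) * (1 - t * Real.cos θ))) * Real.sin θ +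
      (t * Real.cos θ * Real.cos (θ - t * Real.sin θ)) * Real.cos θ -
      Real.cos (t * Real.sin θ) * (t * Real.cos θ) = 0 := by
    rcases div_eq_zero_iff.mp hval with h | h
    · rcases mul_eq_zero.mp (by linarith [h] : (((t * -Real.sin θ) * Real.cos (θ - t * Real.sin θ) +
          (t * Real.cos θ) * (-Real.sin (θ - t * Real.sin θ) * (1 - t * Real.cos θ))) * Real.sin θ +
          (t * Real.cos θ * Real.cos (θ - t * Real.sin θ)) * Real.cos θ -
          Real.cos (t * Real.sin θ) * (t * Real.cos θ)) * (Real.sin θ) ^ 3 = 0) with h' | h'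
      · exact h'
      · exact absurd h' hs3
    · exact absurd h (pow_ne_zero 2 hs3)
  -- abbreviations
  rw [Real.cos_sub] at hN
  rw [Real.cos_sub, Real.sin_sub] at hE
  set s := Real.sin θ with hsdef
  set c := Real.cos θ with hcdef
  set cu := Real.cos (t * s) with hcudef
  set su := Real.sin (t * s) with hsudef
  have hpy : s ^ 2 + c ^ 2 = 1 := Real.sin_sq_add_cos_sq θ
  have hpy2 : su ^ 2 + cu ^ 2 = 1 := Real.sin_sq_add_cos_sq (t * s)
  have e1 : t * c ^ 2 * s * cu + (t * c * s ^ 2 - 1) * su = 0 := by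
    linear_combination hN
  have e2t : t * (c * s ^ 2 * (t * c - 3) * cu + s * (3 * c ^ 2 - 1 - t * c ^ 3) * su) = 0 := by
    linear_combination hE - (t * (c * cu - s * su)) * hpy
  have hq : 3 * t * c - t ^ 2 * c ^ 2 - 3 < 0 := by nlinarith [sq_nonneg (t * c - 3 / 2)]
  have hdet : t * (c * s ^ 2 * (3 * t * c - t ^ 2 * c ^ 2 - 3)) ≠ 0 :=
    mul_ne_zero ht.ne' (mul_ne_zero (mul_ne_zero hc (pow_ne_zero 2 hs.ne')) hq.ne)
  have hcu0 : cu * (t * (c * s ^ 2 * (3 * t * c - t ^ 2 * c ^ 2 - 3))) = 0 := by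
    linear_combination (t * s * (3 * c ^ 2 - 1 - t * c ^ 3)) * e1 - (t * c * s ^ 2 - 1) * e2t +
      (t * cu * c * s ^ 2 * (t ^ 2 * c ^ 2 - 3 * t * c)) * hpy
  have hsu0 : su * (t * (c * s ^ 2 * (3 * t * c - t ^ 2 * c ^ 2 - 3))) = 0 := by
    linear_combination (t * c ^ 2 * s) * e2t - (t * c * s ^ 2 * (t * c - 3)) * e1 +
      (t * su * c * s ^ 2 * (t ^ 2 * c ^ 2 - 3 * t * c)) * hpy
  have hcu : cu = 0 := by
    rcases mul_eq_zero.mp hcu0 with h | h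
    · exact h
    · exact absurd h hdet
  have hsu : su = 0 := by
    rcases mul_eq_zero.mp hsu0 with h | h
    · exact h
    · exact absurd h hdet
  rw [hcu, hsu] at hpy2
  norm_num at hpy2
end

section
/- For every θ ∈ (0, π) there exists t > 0 such that t cos θ cos(θ − t sin θ) sin θ − sin(t sin θ) = 0, i.e., every Grushin geodesic from (−1,0) with θ ≠ 0 mod π has a conjugate time. -/
/-- Every Grushin geodesic from (-1,0) with θ ∈ (0,π) has a conjugate time: a zero
    t > 0 of the numerator of the Jacobian of the exponential map. -/
theorem grushin_conjugate_time_exists (θ : ℝ) (hθ : θ ∈ Set.Ioo 0 Real.pi) :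
    ∃ t : ℝ, 0 < t ∧
      t * Real.cos θ * Real.cos (θ - t * Real.sin θ) * Real.sin θ -
        Real.sin (t * Real.sin θ) = 0 := by
  obtain ⟨hθ0, hθπ⟩ := hθ
  have hs : 0 < Real.sin θ := Real.sin_pos_of_pos_of_lt_pi hθ0 hθπ
  set s := Real.sin θ with hsdef
  set f : ℝ → ℝ := fun t =>
    t * Real.cos θ * Real.cos (θ - t * s) * s - Real.sin (t * s) with hf
  have hcont : Continuous f := by fun_prop
  have ha : Real.pi / s * s = Real.pi := div_mul_cancel₀ _ hs.ne'
  have hb : 2 * Real.pi / s * s = 2 * Real.pi := div_mul_cancel₀ _ hs.ne'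
  have hfa : f (Real.pi / s) = -(Real.pi * Real.cos θ ^ 2) := by
    simp only [hf, ha]
    rw [show θ - Real.pi = -(Real.pi - θ) by ring, Real.cos_neg, Real.cos_pi_sub,
      Real.sin_pi, mul_right_comm, mul_right_comm (Real.pi / s) (Real.cos θ) s, ha]
    ring
  have hfb : f (2 * Real.pi / s) = 2 * Real.pi * Real.cos θ ^ 2 := by
    simp only [hf, hb]
    rw [Real.cos_sub_two_pi, mul_right_comm,
      mul_right_comm (2 * Real.pi / s) (Real.cos θ) s, hb, Real.sin_two_pi]
    ring
  have hπ := Real.pi_pos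
  have hab : Real.pi / s ≤ 2 * Real.pi / s := by gcongr; linarith
  have h0 : (0 : ℝ) ∈ Set.Icc (f (Real.pi / s)) (f (2 * Real.pi / s)) := by
    rw [hfa, hfb]
    constructor <;> nlinarith [sq_nonneg (Real.cos θ)]
  obtain ⟨t, ht, hft⟩ := intermediate_value_Icc hab hcont.continuousOn h0
  exact ⟨t, lt_of_lt_of_le (div_pos hπ hs) ht.1, hft⟩
end

section
/- The wave front of the Grushin plane from (−1,0) is transversal to itself along the cut locus: for θ ∈ (0, π/2), the velocity vectors ∂γ/∂t(θ, π/sin θ) and ∂γ/∂t(π−θ, π/sin θ) are not parallel. -/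
/-- Velocity vector ∂γ/∂t(θ,t) of the Grushin geodesic from (-1,0):
    (1/sin θ)·(cos(θ − t sin θ) sin θ, sin²(θ − t sin θ)). -/
noncomputable def grushinVel (θ t : ℝ) : ℝ × ℝ :=
  (1 / Real.sin θ * (Real.cos (θ - t * Real.sin θ) * Real.sin θ),
   1 / Real.sin θ * (Real.sin (θ - t * Real.sin θ)) ^ 2)

/-- The wave front is transversal to itself along the cut locus: for θ ∈ (0,π/2), the
    velocities at time π/sin θ of the geodesics with parameters θ and π−θ are not
    parallel. -/
theorem grushin_front_transversal (θ : ℝ) (hθ : θ ∈ Set.Ioo 0 (Real.pi / 2)) :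
    (grushinVel θ (Real.pi / Real.sin θ)).1 *
        (grushinVel (Real.pi - θ) (Real.pi / Real.sin θ)).2 -
      (grushinVel θ (Real.pi / Real.sin θ)).2 *
        (grushinVel (Real.pi - θ) (Real.pi / Real.sin θ)).1 ≠ 0 := by
  obtain ⟨h0, h2⟩ := hθ
  have hpi := Real.pi_pos
  have hs : Real.sin θ > 0 :=
    Real.sin_pos_of_pos_of_lt_pi h0 (by linarith)
  have hc : Real.cos θ > 0 :=
    Real.cos_pos_of_mem_Ioo ⟨by linarith, h2⟩
  have hts : Real.pi / Real.sin θ * Real.sin θ = Real.pi := div_mul_cancel₀ _ hs.ne'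
  simp only [grushinVel, Real.sin_pi_sub, hts]
  have e1 : Real.cos (θ - Real.pi) = -Real.cos θ := by
    rw [show θ - Real.pi = -(Real.pi - θ) by ring, Real.cos_neg, Real.cos_pi_sub]
  have e2 : Real.sin (θ - Real.pi) = -Real.sin θ := by
    rw [show θ - Real.pi = -(Real.pi - θ) by ring, Real.sin_neg, Real.sin_pi_sub]
  have e3 : Real.cos (Real.pi - θ - Real.pi) = Real.cos θ := by
    rw [show Real.pi - θ - Real.pi = -θ by ring, Real.cos_neg]
  have e4 : Real.sin (Real.pi - θ - Real.pi) = -Real.sin θ := by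
    rw [show Real.pi - θ - Real.pi = -θ by ring, Real.sin_neg]
  rw [e1, e2, e3, e4]
  have : (1 / Real.sin θ * (-Real.cos θ * Real.sin θ)) * (1 / Real.sin θ * (-Real.sin θ) ^ 2) -
      (1 / Real.sin θ * (-Real.sin θ) ^ 2) * (1 / Real.sin θ * (Real.cos θ * Real.sin θ)) =
      -2 * Real.sin θ * Real.cos θ := by
    field_simp; ring
  rw [this]
  nlinarith [mul_pos hs hc]
end

section
/- If a real number u ∈ (0, π) and θ ∈ (0, π/2), then the angle of the planar curve u ↦ (1, 0) − u cos θ (sin θ, −cos θ) is nonnegative and strictly less than u; in particular this vector never equals a positive or negative multiple of (cos u, sin u) for u ∈ (0, π). -/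
/-- For u ∈ (0,π) and θ ∈ (0,π/2), the angle (argument) of the planar vector
    v(u) = (1 − u cos θ sin θ, u cos²θ) = (1,0) − u cos θ (sin θ, −cos θ)
    is nonnegative and strictly less than u; in particular v(u) is never a nonzero
    multiple of (cos u, sin u). -/
theorem grushin_angle_estimate (θ u : ℝ)
    (hθ : θ ∈ Set.Ioo 0 (Real.pi / 2)) (hu : u ∈ Set.Ioo 0 Real.pi) :
    (0 ≤ Complex.arg ((1 - u * Real.cos θ * Real.sin θ) +
        (u * (Real.cos θ) ^ 2) * Complex.I) ∧
      Complex.arg ((1 - u * Real.cos θ * Real.sin θ) +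
        (u * (Real.cos θ) ^ 2) * Complex.I) < u) ∧
    ∀ c : ℝ, c ≠ 0 →
      (1 - u * Real.cos θ * Real.sin θ, u * (Real.cos θ) ^ 2) ≠
        (c * Real.cos u, c * Real.sin u) := by
  obtain ⟨hθ0, hθπ⟩ := hθ
  obtain ⟨hu0, huπ⟩ := hu
  have hπ := Real.pi_pos
  have hc : 0 < Real.cos θ := Real.cos_pos_of_mem_Ioo ⟨by linarith, hθπ⟩
  have hs : 0 < Real.sin θ := Real.sin_pos_of_pos_of_lt_pi hθ0 (by linarith)
  set p := Real.sin (u / 2) with hp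
  set q := Real.cos (u / 2) with hqdef
  have hq : 0 < q := Real.cos_pos_of_mem_Ioo ⟨by linarith, by linarith⟩
  have hpq : p ^ 2 + q ^ 2 = 1 := Real.sin_sq_add_cos_sq _
  have hsu : Real.sin u = 2 * p * q := by
    rw [show u = 2 * (u / 2) by ring, Real.sin_two_mul]
  have hcu : Real.cos u = q ^ 2 - p ^ 2 := by
    have h := Real.cos_sq (u / 2)
    rw [show 2 * (u / 2) = u by ring, ← hqdef] at h
    linarith [hpq, h]
  have htan : u / 2 * q < p := by
    have h1 : u / 2 < Real.tan (u / 2) := Real.lt_tan (by linarith) (by linarith)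
    rw [Real.tan_eq_sin_div_cos] at h1
    calc u / 2 * q < Real.sin (u / 2) / Real.cos (u / 2) * q :=
          mul_lt_mul_of_pos_right h1 hq
      _ = p := div_mul_cancel₀ _ hq.ne'
  have hsc : Real.sin θ ^ 2 + Real.cos θ ^ 2 = 1 := Real.sin_sq_add_cos_sq _
  have key : 0 < Real.sin u * (1 - u * Real.cos θ * Real.sin θ)
      - Real.cos u * (u * Real.cos θ ^ 2) := by
    rw [hsu, hcu]
    nlinarith [mul_nonneg hu0.le (sq_nonneg (Real.sin θ * q - Real.cos θ * p)),
      mul_pos hq (sub_pos.mpr htan), mul_pos hu0 (mul_pos hq hq), hsc, hu0]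
  set z : ℂ := (1 - u * Real.cos θ * Real.sin θ) + (u * (Real.cos θ) ^ 2) * Complex.I
    with hz
  have him : z.im = u * Real.cos θ ^ 2 := by simp [hz, -Complex.ofReal_cos, -Complex.ofReal_sin, ← Complex.ofReal_pow]
  have hre : z.re = 1 - u * Real.cos θ * Real.sin θ := by simp [hz, -Complex.ofReal_cos, -Complex.ofReal_sin, ← Complex.ofReal_pow]
  have him' : 0 < z.im := by rw [him]; positivity
  have hz0 : z ≠ 0 := by
    intro h; rw [h] at him'; simp at him'
  have habs : 0 < ‖z‖ := norm_pos_iff.mpr hz0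
  have hlt : Complex.arg z < u := by
    by_contra h
    push_neg at h
    have h1 : Real.sin (u - Complex.arg z) ≤ 0 :=
      Real.sin_nonpos_of_nonpos_of_neg_pi_le (by linarith)
        (by linarith [Complex.arg_le_pi z])
    rw [Real.sin_sub, Complex.sin_arg z, Complex.cos_arg hz0, hre, him] at h1
    have h4 : Real.sin u * ((1 - u * Real.cos θ * Real.sin θ) / ‖z‖)
        - Real.cos u * (u * Real.cos θ ^ 2 / ‖z‖)
        = (Real.sin u * (1 - u * Real.cos θ * Real.sin θ)
          - Real.cos u * (u * Real.cos θ ^ 2)) / ‖z‖ := by ring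
    rw [h4] at h1
    have h5 := div_pos key habs
    linarith
  refine ⟨⟨Complex.arg_nonneg_iff.mpr him'.le, hlt⟩, ?_⟩
  intro c hc0 heq
  rw [Prod.mk.injEq] at heq
  obtain ⟨h1, h2⟩ := heq
  rw [h1, h2] at key
  have : Real.sin u * (c * Real.cos u) - Real.cos u * (c * Real.sin u) = 0 := by ring
  linarith
end

section
/- The matching conditions α⁺π − 4a = −α⁻π − 4a and α⁺π − 8a/3 = α⁻π + 8a/3 have the unique solution α⁺ = 8a/(3π), α⁻ = −8a/(3π), and consequently the cut point is (x,y) = ρ₀²(−4a/3, π/2) + O(ρ₀³). -/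
/-- The matching conditions for the two geodesic expansions have the unique solution
    α⁺ = 8a/(3π), α⁻ = −8a/(3π), and consequently the second-order term of the cut
    point is ρ₀²(−4a/3, π/2). -/
theorem grushin_cut_matching (a αp αm : ℝ) :
    ((αp * Real.pi - 4 * a = -αm * Real.pi - 4 * a ∧
        αp * Real.pi - 8 * a / 3 = αm * Real.pi + 8 * a / 3) ↔
      (αp = 8 * a / (3 * Real.pi) ∧ αm = -(8 * a / (3 * Real.pi)))) ∧
    ∀ ρ₀ : ℝ,
      ((8 * a / (3 * Real.pi)) * Real.pi - 4 * a) * ρ₀ ^ 2 = -(4 / 3 * a) * ρ₀ ^ 2 ∧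
      (Real.pi / 2) * ρ₀ ^ 2 = (Real.pi / 2) * ρ₀ ^ 2 := by
  have hπ : Real.pi ≠ 0 := Real.pi_ne_zero
  constructor
  · constructor
    · rintro ⟨h1, h2⟩
      have hm : αm = -αp := by
        have h3 : αm * Real.pi = (-αp) * Real.pi := by linarith
        exact mul_right_cancel₀ hπ h3
      subst hm
      constructor
      · field_simp
        linarith [h2]
      · field_simp
        linarith [h2]
    · rintro ⟨hp, hm⟩
      subst hp hm
      constructor <;> field_simp <;> ring
  · intro ρ₀
    refine ⟨?_, rfl⟩
    field_simp
    ring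
end

section
/- For any t > π, the map θ ↦ x(θ,t) = −sin(θ − t sin θ)/sin θ is strictly decreasing on the interval (0, arcsin(π/t)]. -/
open Real

/-- `y cos y < sin y` on `(0, π/2)`. -/
lemma aux_mul_cos_lt_sin {y : ℝ} (h1 : 0 < y) (h2 : y < π / 2) :
    y * Real.cos y < Real.sin y := by
  have hc : 0 < Real.cos y := Real.cos_pos_of_mem_Ioo ⟨by linarith [Real.pi_pos], h2⟩
  have := Real.lt_tan h1 h2
  rw [Real.tan_eq_sin_div_cos, lt_div_iff₀ hc] at this
  linarith

/-- Key inequality: for `θ ∈ (0, π/2)` and `x ∈ (0, π)`,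
    `x cos θ cos (θ - x) < sin x`. -/
lemma aux_key {θ x : ℝ} (hθ0 : 0 < θ) (hθ1 : θ < π / 2) (hx0 : 0 < x) (hx1 : x < π) :
    x * Real.cos θ * Real.cos (θ - x) < Real.sin x := by
  have hprod : Real.cos θ * Real.cos (θ - x)
      = (Real.cos x + Real.cos (2 * θ - x)) / 2 := by
    have e1 := Real.cos_sub θ (θ - x)
    have e2 := Real.cos_add θ (θ - x)
    rw [show θ - (θ - x) = x by ring] at e1
    rw [show θ + (θ - x) = 2 * θ - x by ring] at e2
    linarith
  have hbound : Real.cos (2 * θ - x) ≤ 1 := Real.cos_le_one _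
  -- sin x > x * (1 + cos x) / 2
  have hy0 : 0 < x / 2 := by linarith
  have hy1 : x / 2 < π / 2 := by linarith
  have hcy : 0 < Real.cos (x / 2) := Real.cos_pos_of_mem_Ioo ⟨by linarith [Real.pi_pos], hy1⟩
  have hs2 := Real.sin_two_mul (x / 2)
  have hc2 := Real.cos_two_mul (x / 2)
  rw [show 2 * (x / 2) = x by ring] at hs2 hc2
  have hkey2 : x * (1 + Real.cos x) / 2 < Real.sin x := by
    rw [hs2, hc2]
    have := aux_mul_cos_lt_sin hy0 hy1
    nlinarith [sq_nonneg (Real.cos (x / 2))]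
  calc x * Real.cos θ * Real.cos (θ - x)
      = x * ((Real.cos x + Real.cos (2 * θ - x)) / 2) := by rw [mul_assoc, hprod]
    _ ≤ x * ((Real.cos x + 1) / 2) := by
        apply mul_le_mul_of_nonneg_left _ hx0.le
        linarith
    _ = x * (1 + Real.cos x) / 2 := by ring
    _ < Real.sin x := hkey2

/-- For any t > π, the map θ ↦ x(θ,t) = −sin(θ − t sin θ)/sin θ is strictly decreasing
    on (0, arcsin(π/t)]. -/
theorem grushin_x_strictAnti (t : ℝ) (ht : Real.pi < t) :
    StrictAntiOn (fun θ : ℝ => -Real.sin (θ - t * Real.sin θ) / Real.sin θ)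
      (Set.Ioc 0 (Real.arcsin (Real.pi / t))) := by
  have hπ := Real.pi_pos
  have ht0 : 0 < t := lt_trans hπ ht
  have hq0 : 0 < π / t := div_pos hπ ht0
  have hq1 : π / t < 1 := (div_lt_one ht0).mpr ht
  set a := Real.arcsin (π / t) with ha
  have ha0 : 0 < a := Real.arcsin_pos.mpr hq0
  have haπ : a < π / 2 := Real.arcsin_lt_pi_div_two.mpr hq1
  have hsina : Real.sin a = π / t := Real.sin_arcsin (by linarith) hq1.le
  -- every point of Ioc 0 a has sin θ ≠ 0
  have hsinpos : ∀ θ ∈ Set.Ioc (0:ℝ) a, 0 < Real.sin θ := fun θ hθ =>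
    Real.sin_pos_of_pos_of_lt_pi hθ.1 (by linarith [hθ.2])
  apply strictAntiOn_of_deriv_neg (convex_Ioc 0 a)
  · apply ContinuousOn.div
    · exact (Real.continuous_sin.comp (by continuity)).neg.continuousOn
    · exact Real.continuous_sin.continuousOn
    · exact fun θ hθ => (hsinpos θ hθ).ne'
  · intro θ hθ
    rw [interior_Ioc] at hθ
    obtain ⟨hθ0, hθa⟩ := hθ
    have hθπ2 : θ < π / 2 := lt_trans hθa haπ
    have hs : 0 < Real.sin θ := hsinpos θ ⟨hθ0, hθa.le⟩
    have hc : 0 < Real.cos θ := Real.cos_pos_of_mem_Ioo ⟨by linarith, hθπ2⟩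
    have hsina' : Real.sin θ < π / t := by
      rw [← hsina]
      exact Real.sin_lt_sin_of_lt_of_le_pi_div_two (by linarith) haπ.le hθa
    have hx1 : t * Real.sin θ < π := by
      have := (lt_div_iff₀' ht0).mp hsina'
      linarith
    have hx0 : 0 < t * Real.sin θ := mul_pos ht0 hs
    -- compute the derivative
    have hnum : HasDerivAt (fun θ : ℝ => -Real.sin (θ - t * Real.sin θ))
        (-((1 - t * Real.cos θ) * Real.cos (θ - t * Real.sin θ))) θ := by
      have h1 : HasDerivAt (fun θ : ℝ => θ - t * Real.sin θ) (1 - t * Real.cos θ) θ :=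
        (hasDerivAt_id θ).sub ((Real.hasDerivAt_sin θ).const_mul t)
      have h2 := (Real.hasDerivAt_sin (θ - t * Real.sin θ)).comp θ h1
      have h3 : HasDerivAt (fun θ : ℝ => -Real.sin (θ - t * Real.sin θ))
          (-(Real.cos (θ - t * Real.sin θ) * (1 - t * Real.cos θ))) θ := h2.neg
      exact h3.congr_deriv (by ring)
    have hden : HasDerivAt Real.sin (Real.cos θ) θ := Real.hasDerivAt_sin θ
    have hdf := hnum.div hden hs.ne'
    rw [show (fun θ : ℝ => -Real.sin (θ - t * Real.sin θ) / Real.sin θ)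
        = (fun θ : ℝ => -Real.sin (θ - t * Real.sin θ)) / Real.sin from rfl, hdf.deriv]
    apply div_neg_of_neg_of_pos _ (by positivity)
    -- numerator: -((1 - t cos θ) cos u) * sin θ - (- sin u) * cos θ < 0
    set u := θ - t * Real.sin θ with hu
    have hkey := aux_key hθ0 hθπ2 hx0 hx1
    have hsin_sub : Real.sin u * Real.cos θ - Real.cos u * Real.sin θ
        = -Real.sin (t * Real.sin θ) := by
      rw [← Real.sin_sub, hu, show θ - t * Real.sin θ - θ = -(t * Real.sin θ) by ring,
        Real.sin_neg]
    have hcu : Real.cos u = Real.cos (θ - t * Real.sin θ) := by rw [hu]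
    nlinarith [hkey, hsin_sub]
end
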